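/- There is a bijection between valley-less Motzkin paths with air pockets of length n-1 and peak-less Motzkin paths with air pockets of length n; hence the number of valley-less MAP of length n-1 equals the number of peak-less MAP of length n for all n ≥ 1. -/

import Mathlib

/-- A Motzkin path with air pockets (MAP), encoded as the list of vertical displacements
of its steps (`1` for `U`, `0` for `H`, `-k` for `D_k`): it stays in the first quadrant,
ends on the `x`-axis, and no two down-steps are consecutive. -/
def IsMAP (l : List ℤ) : Prop :=
  (∀ s ∈ l, s = 1 ∨ s = 0 ∨ s ≤ -1) ∧
  (∀ p ∈ l.scanl (· + ·) 0, 0 ≤ p) ∧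
  l.sum = 0 ∧
  l.Chain' (fun a b => ¬(a < 0 ∧ b < 0))

/-- A MAP is peak-less if it has no factor `U D_k`. -/
def PeakLess (l : List ℤ) : Prop := l.Chain' (fun a b => ¬(a = 1 ∧ b < 0))

/-- A MAP is valley-less if it has no factor `D_k U`. -/
def ValleyLess (l : List ℤ) : Prop := l.Chain' (fun a b => ¬(a < 0 ∧ b = 1))

namespace MAPaux


def sw : List ℤ → List ℤ
  | [] => []
  | [a] => [a]
  | a :: b :: t => if a < 0 then b :: a :: sw t else a :: sw (b :: t)

def unsw : List ℤ → List ℤ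
  | [] => []
  | [a] => [a]
  | a :: b :: t => if b < 0 then b :: a :: unsw t else a :: unsw (b :: t)

lemma sw_perm (l : List ℤ) : (sw l).Perm l := by
  induction l using sw.induct with
  | case1 => simp [sw]
  | case2 a => simp [sw]
  | case3 a b t h ih =>
      simp only [sw, if_pos h]
      exact ((ih.cons a).cons b).trans (List.Perm.swap a b t)
  | case4 a b t h ih =>
      simp only [sw, if_neg h]
      exact ih.cons a

lemma unsw_perm (l : List ℤ) : (unsw l).Perm l := by
  induction l using unsw.induct with
  | case1 => simp [unsw]
  | case2 a => simp [unsw]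
  | case3 a b t h ih =>
      simp only [unsw, if_pos h]
      exact ((ih.cons a).cons b).trans (List.Perm.swap a b t)
  | case4 a b t h ih =>
      simp only [unsw, if_neg h]
      exact ih.cons a

def P (c : ℤ) (l : List ℤ) : Prop := ∀ p ∈ l.scanl (· + ·) c, 0 ≤ p

lemma P_cons {c a : ℤ} {l : List ℤ} : P c (a :: l) ↔ 0 ≤ c ∧ P (c + a) l := by
  simp [P, List.scanl_cons, or_imp, forall_and]

lemma P_head {c : ℤ} {l : List ℤ} (h : P c l) : 0 ≤ c := by
  cases l with
  | nil => simpa [P] using h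
  | cons a t => exact (P_cons.mp h).1

lemma P_append {l₁ l₂ : List ℤ} {c : ℤ} :
    P c (l₁ ++ l₂) ↔ P c l₁ ∧ P (c + l₁.sum) l₂ := by
  induction l₁ generalizing c with
  | nil =>
      simp only [List.nil_append, List.sum_nil, add_zero]
      exact ⟨fun h => ⟨by cases l₂ with
        | nil => simpa [P] using P_head h
        | cons a t => simpa [P] using P_head h, h⟩, fun h => h.2⟩
  | cons a t ih =>
      simp only [List.cons_append, P_cons, ih, List.sum_cons, and_assoc, add_assoc]

lemma P_nil' {c : ℤ} : P c ([] : List ℤ) ↔ 0 ≤ c := by simp [P]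

/-- scanl-nonnegativity is preserved by `sw`. -/
lemma sw_P (l : List ℤ) (hG : l.Chain' (fun a b => a < 0 → b = 0)) :
    ∀ c, P c l → P c (sw l) := by
  induction l using sw.induct with
  | case1 => intro c hc; simpa [sw] using hc
  | case2 a => intro c hc; simpa [sw] using hc
  | case3 a b t h ih =>
      intro c hc
      have hb : b = 0 := (List.isChain_cons_cons.mp hG).1 h
      rw [P_cons, P_cons] at hc
      obtain ⟨h1, h2, h3⟩ := hc
      simp only [sw, if_pos h, P_cons, hb] at *
      refine ⟨h1, by omega, ?_⟩
      have := ih hG.tail.tail (c + a) (by simpa [hb] using h3)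
      convert this using 2
      omega
  | case4 a b t h ih =>
      intro c hc
      rw [P_cons] at hc
      simp only [sw, if_neg h, P_cons]
      exact ⟨hc.1, ih hG.tail _ hc.2⟩

/-- scanl-nonnegativity is preserved by `unsw`. -/
lemma unsw_P (l : List ℤ) (hG : l.Chain' (fun a b => b < 0 → a = 0)) :
    ∀ c, P c l → P c (unsw l) := by
  induction l using unsw.induct with
  | case1 => intro c hc; simpa [unsw] using hc
  | case2 a => intro c hc; simpa [unsw] using hc
  | case3 a b t h ih =>
      intro c hc
      have ha : a = 0 := (List.isChain_cons_cons.mp hG).1 h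
      rw [P_cons, P_cons] at hc
      obtain ⟨h1, h2, h3⟩ := hc
      have h4 : 0 ≤ c + a + b := P_head h3
      simp only [unsw, if_pos h, P_cons]
      refine ⟨h1, by omega, ?_⟩
      have e : c + b + a = c + a + b := by ring
      rw [e]
      exact ih hG.tail.tail _ h3
  | case4 a b t h ih =>
      intro c hc
      rw [P_cons] at hc
      simp only [unsw, if_neg h, P_cons]
      exact ⟨hc.1, ih hG.tail _ hc.2⟩


lemma last_tail {a b : ℤ} {t : List ℤ}
    (h : ∀ x ∈ (a :: b :: t).getLast?, (0:ℤ) ≤ x) :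
    ∀ x ∈ (b :: t).getLast?, (0:ℤ) ≤ x := by
  simpa [List.getLast?_cons_cons] using h

lemma last_tail2 {a b : ℤ} {t : List ℤ}
    (h : ∀ x ∈ (a :: b :: t).getLast?, (0:ℤ) ≤ x) :
    ∀ x ∈ t.getLast?, (0:ℤ) ≤ x := by
  cases t with
  | nil => simp
  | cons c r =>
      have := last_tail (a := a) h
      simpa [List.getLast?_cons_cons] using this

lemma head_tail_nonneg {b : ℤ} {t : List ℤ}
    (hG : (b :: t).Chain' (fun a b => b < 0 → a = 0)) (hb : b < 0) :
    ∀ x ∈ t.head?, (0:ℤ) ≤ x := by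
  intro x hx
  have h := (List.isChain_cons.mp hG).1 x hx
  by_contra hneg
  push_neg at hneg
  exact absurd (h hneg) (by omega)

/-- Forward: chain and head conditions on `sw l`. -/
lemma sw_good (l : List ℤ)
    (hG : l.Chain' (fun a b => a < 0 → b = 0))
    (hL : ∀ x ∈ l.getLast?, (0:ℤ) ≤ x) :
    (sw l).Chain' (fun a b => b < 0 → a = 0) ∧ ∀ x ∈ (sw l).head?, (0:ℤ) ≤ x := by
  induction l using sw.induct with
  | case1 => simp [sw, List.Chain']
  | case2 a =>
      refine ⟨by simp [sw, List.Chain'], ?_⟩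
      simpa [sw] using hL
  | case3 a b t h ih =>
      have hb : b = 0 := (List.isChain_cons_cons.mp hG).1 h
      have ih' := ih (hG.tail.tail) (last_tail2 hL)
      simp only [sw, if_pos h]
      constructor
      · refine List.isChain_cons_cons.mpr ⟨fun _ => hb, ?_⟩
        refine List.isChain_cons.mpr ⟨?_, ih'.1⟩
        intro y hy hyneg
        exact absurd (ih'.2 y hy) (by omega)
      · intro x hx
        simp only [List.head?_cons, Option.mem_def, Option.some.injEq] at hx
        omega
  | case4 a b t h ih =>
      have ih' := ih (hG.tail) (last_tail hL)
      simp only [sw, if_neg h]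
      constructor
      · refine List.isChain_cons.mpr ⟨?_, ih'.1⟩
        intro y hy hyneg
        exact absurd (ih'.2 y hy) (by omega)
      · intro x hx
        simp only [List.head?_cons, Option.mem_def, Option.some.injEq] at hx
        omega

/-- Backward: chain and last conditions on `unsw l`. -/
lemma unsw_good (l : List ℤ)
    (hG : l.Chain' (fun a b => b < 0 → a = 0))
    (hH : ∀ x ∈ l.head?, (0:ℤ) ≤ x) :
    (unsw l).Chain' (fun a b => a < 0 → b = 0) ∧ ∀ x ∈ (unsw l).getLast?, (0:ℤ) ≤ x := by
  induction l using unsw.induct with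
  | case1 => simp [unsw, List.Chain']
  | case2 a =>
      refine ⟨by simp [unsw, List.Chain'], ?_⟩
      simpa [unsw] using hH
  | case3 a b t h ih =>
      have ha : a = 0 := (List.isChain_cons_cons.mp hG).1 h
      have ih' := ih (hG.tail.tail) (head_tail_nonneg hG.tail h)
      simp only [unsw, if_pos h]
      constructor
      · refine List.isChain_cons_cons.mpr ⟨fun _ => ha, ?_⟩
        refine List.isChain_cons.mpr ⟨?_, ih'.1⟩
        intro y _ hlt
        omega
      · cases ht : unsw t with
        | nil => simp [ht, ha]
        | cons c r =>
            rw [ht] at ih'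
            intro x hx
            rw [List.getLast?_cons_cons, List.getLast?_cons_cons] at hx
            exact ih'.2 x hx
  | case4 a b t h ih =>
      have ha : 0 ≤ a := by simpa using hH
      have hb : 0 ≤ b := by omega
      have ih' := ih (hG.tail) (by simpa using hb)
      simp only [unsw, if_neg h]
      constructor
      · refine List.isChain_cons.mpr ⟨?_, ih'.1⟩
        intro y _ hlt
        omega
      · have hne : unsw (b :: t) ≠ [] := by
          have := (unsw_perm (b :: t)).length_eq
          intro hc; rw [hc] at this; simp at this
        cases hu : unsw (b :: t) with
        | nil => exact absurd hu hne
        | cons c r =>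
            rw [hu] at ih'
            intro x hx
            rw [List.getLast?_cons_cons] at hx
            exact ih'.2 x hx

/-- `unsw` inverts `sw`. -/
lemma unsw_sw (l : List ℤ)
    (hG : l.Chain' (fun a b => a < 0 → b = 0))
    (hL : ∀ x ∈ l.getLast?, (0:ℤ) ≤ x) :
    unsw (sw l) = l := by
  induction l using sw.induct with
  | case1 => simp [sw, unsw]
  | case2 a => simp [sw, unsw]
  | case3 a b t h ih =>
      have hb : b = 0 := (List.isChain_cons_cons.mp hG).1 h
      simp only [sw, if_pos h]
      rw [show unsw (b :: a :: sw t) = a :: b :: unsw (sw t) by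
        simp only [unsw, if_pos h]]
      rw [ih hG.tail.tail (last_tail2 hL)]
  | case4 a b t h ih =>
      simp only [sw, if_neg h]
      have hg := sw_good (b :: t) hG.tail (last_tail hL)
      have hne : sw (b :: t) ≠ [] := by
        have := (sw_perm (b :: t)).length_eq
        intro hc; rw [hc] at this; simp at this
      cases hu : sw (b :: t) with
      | nil => exact absurd hu hne
      | cons c r =>
          rw [hu] at hg
          have hc : 0 ≤ c := by simpa using hg.2
          rw [show unsw (a :: c :: r) = a :: unsw (c :: r) by
            simp only [unsw, if_neg (by omega : ¬ c < 0)]]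
          rw [← hu, ih hG.tail (last_tail hL)]

/-- `sw` inverts `unsw`. -/
lemma sw_unsw (l : List ℤ)
    (hG : l.Chain' (fun a b => b < 0 → a = 0))
    (hH : ∀ x ∈ l.head?, (0:ℤ) ≤ x) :
    sw (unsw l) = l := by
  induction l using unsw.induct with
  | case1 => simp [sw, unsw]
  | case2 a => simp [sw, unsw]
  | case3 a b t h ih =>
      simp only [unsw, if_pos h]
      rw [show sw (b :: a :: unsw t) = a :: b :: sw (unsw t) by
        simp only [sw, if_pos h]]
      rw [ih hG.tail.tail (head_tail_nonneg hG.tail h)]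
  | case4 a b t h ih =>
      have ha : 0 ≤ a := by simpa using hH
      have hb : 0 ≤ b := by omega
      simp only [unsw, if_neg h]
      have hne : unsw (b :: t) ≠ [] := by
        have := (unsw_perm (b :: t)).length_eq
        intro hc; rw [hc] at this; simp at this
      cases hu : unsw (b :: t) with
      | nil => exact absurd hu hne
      | cons c r =>
          rw [show sw (a :: c :: r) = a :: sw (c :: r) by
            simp only [sw, if_neg (by omega : ¬ a < 0)]]
          rw [← hu, ih hG.tail (by simpa using hb)]

/-- From the MAP conditions and valley-lessness, every down-step is followed by `0`. -/
lemma chain_of_valleyless {l : List ℤ}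
    (hs : ∀ s ∈ l, s = 1 ∨ s = 0 ∨ s ≤ -1)
    (hdd : l.Chain' (fun a b => ¬(a < 0 ∧ b < 0)))
    (hv : l.Chain' (fun a b => ¬(a < 0 ∧ b = 1))) :
    l.Chain' (fun a b => a < 0 → b = 0) := by
  induction l with
  | nil => simp [List.Chain']
  | cons a t ih =>
      rw [List.Chain', List.isChain_cons] at hdd hv ⊢
      refine ⟨?_, ih (fun s hssub => hs s (List.mem_cons_of_mem a hssub)) hdd.2 hv.2⟩
      intro y hy hlt
      have hmem : y ∈ a :: t := List.mem_cons_of_mem a (List.mem_of_mem_head? hy)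
      have h1 := hdd.1 y hy
      have h2 := hv.1 y hy
      have h3 := hs y hmem
      rcases h3 with h3 | h3 | h3
      · exact absurd ⟨hlt, h3⟩ h2
      · exact h3
      · exact absurd ⟨hlt, by omega⟩ h1

/-- From the MAP conditions and peak-lessness, every down-step is preceded by `0`. -/
lemma chain_of_peakless {l : List ℤ}
    (hs : ∀ s ∈ l, s = 1 ∨ s = 0 ∨ s ≤ -1)
    (hdd : l.Chain' (fun a b => ¬(a < 0 ∧ b < 0)))
    (hp : l.Chain' (fun a b => ¬(a = 1 ∧ b < 0))) :
    l.Chain' (fun a b => b < 0 → a = 0) := by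
  induction l with
  | nil => simp [List.Chain']
  | cons a t ih =>
      rw [List.Chain', List.isChain_cons] at hdd hp ⊢
      refine ⟨?_, ih (fun s hssub => hs s (List.mem_cons_of_mem a hssub)) hdd.2 hp.2⟩
      intro y hy hlt
      have h1 := hdd.1 y hy
      have h2 := hp.1 y hy
      have h3 := hs a (List.mem_cons_self (a := a) (l := t))
      rcases h3 with h3 | h3 | h3
      · exact absurd ⟨h3, hlt⟩ h2
      · exact h3
      · exact absurd ⟨by omega, hlt⟩ h1


lemma concat_chain {l : List ℤ} (hm : IsMAP l) (hv : ValleyLess l) :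
    (l ++ [(0:ℤ)]).Chain' (fun a b => a < 0 → b = 0) := by
  obtain ⟨hs, _, _, hdd⟩ := hm
  refine List.isChain_append.mpr ⟨chain_of_valleyless hs hdd hv, by simp, ?_⟩
  intro x _ y hy
  simp only [List.head?_cons, Option.mem_def, Option.some.injEq] at hy
  omega

lemma concat_last {l : List ℤ} : ∀ x ∈ (l ++ [(0:ℤ)]).getLast?, (0:ℤ) ≤ x := by
  simp [List.getLast?_concat]

lemma map_headnonneg {m : List ℤ} (hpos : P 0 m) : ∀ x ∈ m.head?, (0:ℤ) ≤ x := by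
  cases m with
  | nil => simp
  | cons a t =>
      intro x hx
      simp only [List.head?_cons, Option.mem_def, Option.some.injEq] at hx
      have := P_head (P_cons.mp hpos).2
      omega

lemma forward {l : List ℤ} (hm : IsMAP l) (hv : ValleyLess l) :
    IsMAP (sw (l ++ [0])) ∧ PeakLess (sw (l ++ [0])) ∧
      (sw (l ++ [0])).length = l.length + 1 := by
  have hG := concat_chain hm hv
  have hL := concat_last (l := l)
  obtain ⟨hs, hpos, hsum, hdd⟩ := hm
  have hperm := sw_perm (l ++ [0])
  have hgood := sw_good (l ++ [0]) hG hL
  refine ⟨⟨?_, ?_, ?_, ?_⟩, ?_, ?_⟩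
  · intro s hsm
    have : s ∈ l ++ [0] := hperm.mem_iff.mp hsm
    rcases List.mem_append.mp this with h | h
    · exact hs s h
    · simp at h; omega
  · have h0 : P 0 (l ++ [0]) := by
      refine P_append.mpr ⟨hpos, ?_⟩
      rw [hsum]
      intro p hp
      simp [List.scanl] at hp
      omega
    exact sw_P (l ++ [0]) hG 0 h0
  · rw [hperm.sum_eq]
    simp [hsum]
  · exact hgood.1.imp (fun a b h hab => by have := h hab.2; omega)
  · exact hgood.1.imp (fun a b h hab => by have := h hab.2; omega)
  · rw [hperm.length_eq]
    simp

lemma backward {m : List ℤ} (hm : IsMAP m) (hp : PeakLess m) (hne : m ≠ []) :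
    IsMAP ((unsw m).dropLast) ∧ ValleyLess ((unsw m).dropLast) ∧
      ((unsw m).dropLast).length = m.length - 1 ∧ (unsw m).dropLast ++ [0] = unsw m := by
  obtain ⟨hs, hpos, hsum, hdd⟩ := hm
  have hG := chain_of_peakless hs hdd hp
  have hH : ∀ x ∈ m.head?, (0:ℤ) ≤ x := map_headnonneg hpos
  have hperm := unsw_perm m
  have hgood := unsw_good m hG hH
  have uP : P 0 (unsw m) := unsw_P m hG 0 hpos
  have une : unsw m ≠ [] := by
    intro hc
    have := hperm.length_eq
    rw [hc] at this
    exact hne (List.length_eq_zero_iff.mp this.symm)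
  set x := (unsw m).getLast une with hxdef
  have hudecomp : (unsw m).dropLast ++ [x] = unsw m := List.dropLast_append_getLast une
  have hxmem : x ∈ (unsw m).getLast? := by
    rw [List.getLast?_eq_getLast une]; rfl
  have hxnonneg : 0 ≤ x := hgood.2 x hxmem
  have hPsplit : P 0 ((unsw m).dropLast) ∧ P (0 + ((unsw m).dropLast).sum) [x] := by
    rw [← hudecomp] at uP
    exact P_append.mp uP
  have hsum' : ((unsw m).dropLast).sum + x = 0 := by
    have := hperm.sum_eq
    rw [hsum] at this
    rw [← hudecomp] at this
    simpa using this
  have hsumdl : 0 ≤ ((unsw m).dropLast).sum := by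
    have := P_head hPsplit.2
    omega
  have hx0 : x = 0 := by omega
  have hudecomp0 : (unsw m).dropLast ++ [0] = unsw m := by rw [← hx0]; exact hudecomp
  have hchaindl : ((unsw m).dropLast).Chain' (fun a b => a < 0 → b = 0) := by
    have := hgood.1
    rw [← hudecomp0] at this
    exact (List.isChain_append.mp this).1
  refine ⟨⟨?_, hPsplit.1, by omega, ?_⟩, ?_, ?_, hudecomp0⟩
  · intro s hsm
    have hsub : s ∈ unsw m := (List.dropLast_sublist (unsw m)).mem hsm
    exact hs s (hperm.mem_iff.mp hsub)
  · exact hchaindl.imp (fun a b h hab => by have := h hab.1; omega)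
  · exact hchaindl.imp (fun a b h hab => by have := h hab.1; omega)
  · rw [List.length_dropLast, hperm.length_eq]

end MAPaux

/-- There is a bijection between valley-less Motzkin paths with air pockets of length
`n-1` and peak-less Motzkin paths with air pockets of length `n`, for all `n ≥ 1`. -/
theorem valleyless_equiv_peakless (n : ℕ) (hn : 1 ≤ n) :
    Nonempty
      ({l : List ℤ // IsMAP l ∧ ValleyLess l ∧ l.length = n - 1} ≃
       {l : List ℤ // IsMAP l ∧ PeakLess l ∧ l.length = n}) := by
  refine ⟨{
    toFun := fun x => ⟨MAPaux.sw (x.1 ++ [0]), ?_⟩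
    invFun := fun y => ⟨(MAPaux.unsw y.1).dropLast, ?_⟩
    left_inv := ?_
    right_inv := ?_ }⟩
  · obtain ⟨hm, hv, hlen⟩ := x.2
    have hf := MAPaux.forward hm hv
    exact ⟨hf.1, hf.2.1, by rw [hf.2.2, hlen]; omega⟩
  · obtain ⟨hm, hp, hlen⟩ := y.2
    have hne : y.1 ≠ [] := by
      intro h
      rw [h] at hlen
      simp at hlen
      omega
    have hb := MAPaux.backward hm hp hne
    exact ⟨hb.1, hb.2.1, by rw [hb.2.2.1, hlen]⟩
  · intro x
    apply Subtype.ext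
    show (MAPaux.unsw (MAPaux.sw (x.1 ++ [0]))).dropLast = x.1
    obtain ⟨hm, hv, hlen⟩ := x.2
    rw [MAPaux.unsw_sw _ (MAPaux.concat_chain hm hv) MAPaux.concat_last,
      List.dropLast_concat]
  · intro y
    apply Subtype.ext
    show MAPaux.sw ((MAPaux.unsw y.1).dropLast ++ [0]) = y.1
    obtain ⟨hm, hp, hlen⟩ := y.2
    have hne : y.1 ≠ [] := by
      intro h
      rw [h] at hlen
      simp at hlen
      omega
    have hb := MAPaux.backward hm hp hne
    rw [hb.2.2.2]
    exact MAPaux.sw_unsw y.1 (MAPaux.chain_of_peakless hm.1 hm.2.2.2 hp)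
      (MAPaux.map_headnonneg hm.2.1)
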